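/- For every integer n ≥ 1, every real polynomial p with deg p ≤ 2n+1, and every real x, Σ_{j=0}^{2n+1} d_j · p(x + j − n) = p(x + 1/2), where d_j = (1/2^{4n+1}) · ((−1)^{j−n−1}(n+1)/(2j−2n−1)) · C(2n+1, n) · C(2n+1, j). -/

import Mathlib

/-- The Deslauriers–Dubuc coefficients of the `(2n+2)`-point interpolatory scheme. -/
noncomputable def ddCoef (n j : ℕ) : ℝ :=
  (1 / 2 ^ (4 * n + 1)) *
    ((-1 : ℝ) ^ ((j : ℤ) - n - 1) * (n + 1) / ((2 * (j : ℤ) - 2 * n - 1 : ℤ) : ℝ)) *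
    (Nat.choose (2 * n + 1) n : ℝ) * (Nat.choose (2 * n + 1) j : ℝ)

/-- The vertex-rule coefficients of the `(2n+2)`-point combined binary subdivision scheme. -/
noncomputable def vCoef (n : ℕ) (α : ℝ) (j : ℕ) : ℝ :=
  if j = n then
    1 + α - α / 2 ^ (4 * n + 1) * (Nat.choose (4 * n + 2) (2 * n + 1) : ℝ)
  else
    -(α / 2 ^ (4 * n + 1)) * (Nat.choose (4 * n + 2) (2 * j + 1) : ℝ)

/-- The edge-rule coefficients of the `(2n+2)`-point combined binary subdivision scheme. -/
noncomputable def eCoef (n : ℕ) (α : ℝ) (j : ℕ) : ℝ :=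
  (1 + α) * ddCoef n j - α / 2 ^ (4 * n + 1) * (Nat.choose (4 * n + 2) (2 * j) : ℝ)

namespace DDaux

lemma prod_sub_left' (j : ℕ) :
    ∏ k ∈ Finset.range j, ((j:ℝ) - k) = j.factorial := by
  rw [← Finset.prod_range_reflect]
  rw [show (j.factorial : ℝ) = ((∏ k ∈ Finset.range j, (k+1) : ℕ) : ℝ) by
    rw [Finset.prod_range_add_one_eq_factorial]]
  push_cast
  refine Finset.prod_congr rfl fun k hk => ?_
  rw [Finset.mem_range] at hk
  rw [Nat.cast_sub (by omega), Nat.cast_sub (by omega)]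
  push_cast
  ring

lemma prod_sub_right' (j m : ℕ) (hj : j < m) :
    ∏ k ∈ Finset.Ico (j+1) m, ((j:ℝ) - k) = (-1)^(m-1-j) * (m-1-j).factorial := by
  rw [Finset.prod_Ico_eq_prod_range]
  have h1 : ∀ i ∈ Finset.range (m - (j+1)), ((j:ℝ) - (j+1+i : ℕ)) = (-1) * (i+1) := by
    intro i _; push_cast; ring
  rw [Finset.prod_congr rfl h1, Finset.prod_mul_distrib, Finset.prod_const]
  rw [show m - (j+1) = m - 1 - j by omega, Finset.card_range]
  congr 1
  rw [show ((m-1-j).factorial : ℝ) = ((∏ k ∈ Finset.range (m-1-j), (k+1) : ℕ) : ℝ) by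
    rw [Finset.prod_range_add_one_eq_factorial]]
  push_cast; ring

lemma prod_odd' (m : ℕ) :
    ∏ k ∈ Finset.range m, (2*(k:ℝ)+1) = (2*m).factorial / (2^m * m.factorial) := by
  induction m with
  | zero => simp
  | succ m ih =>
    rw [Finset.prod_range_succ, ih]
    have h1 : 2*(m+1) = (2*m+1)+1 := by ring
    rw [h1, Nat.factorial_succ, show 2*m+1 = (2*m)+1 from rfl, Nat.factorial_succ,
      Nat.factorial_succ]
    have h2 : (2:ℝ)^m ≠ 0 := by positivity
    have h3 : (m.factorial : ℝ) ≠ 0 := by exact_mod_cast m.factorial_ne_zero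
    field_simp
    push_cast
    ring

lemma prod_first_half (n : ℕ) :
    ∏ k ∈ Finset.range (n+1), ((2*n+1:ℝ) - 2*k)
      = (2*(n+1)).factorial / (2^(n+1) * (n+1).factorial) := by
  rw [← prod_odd', ← Finset.prod_range_reflect]
  refine Finset.prod_congr rfl fun k hk => ?_
  rw [Finset.mem_range] at hk
  rw [Nat.cast_sub (by omega)]
  push_cast
  ring

lemma prod_second_half (n : ℕ) :
    ∏ k ∈ Finset.Ico (n+1) (2*n+2), ((2*n+1:ℝ) - 2*k)
      = (-1)^(n+1) * ((2*(n+1)).factorial / (2^(n+1) * (n+1).factorial)) := by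
  rw [Finset.prod_Ico_eq_prod_range, show 2*n+2 - (n+1) = n+1 by omega]
  have h1 : ∀ i ∈ Finset.range (n+1), ((2*n+1:ℝ) - 2*(n+1+i : ℕ)) = (-1) * (2*(i:ℝ)+1) := by
    intro i _; push_cast; ring
  rw [Finset.prod_congr rfl h1, Finset.prod_mul_distrib, Finset.prod_const, Finset.card_range,
    prod_odd']

lemma hne_odd (n j : ℕ) : ((2*n+1:ℝ) - 2*j) ≠ 0 := by
  intro h
  have : ((2*n+1:ℤ) : ℝ) = ((2*j:ℤ) : ℝ) := by push_cast; linarith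
  have := Int.cast_injective (α := ℝ) this
  omega

lemma prod_B (n j : ℕ) (hj : j < 2*n+2) :
    ∏ k ∈ (Finset.range (2*n+2)).erase j, ((2*n+1:ℝ) - 2*k)
      = (-1)^(n+1) * ((2*(n+1)).factorial / (2^(n+1) * (n+1).factorial))^2
        / ((2*n+1:ℝ) - 2*j) := by
  rw [eq_div_iff (hne_odd n j), Finset.prod_erase_mul _ _ (Finset.mem_range.mpr hj),
    ← Finset.prod_range_mul_prod_Ico _ (show n+1 ≤ 2*n+2 by omega),
    prod_first_half, prod_second_half]
  ring

lemma prod_A (n j : ℕ) (hj : j < 2*n+2) :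
    ∏ k ∈ (Finset.range (2*n+2)).erase j, ((j:ℝ) - k)
      = j.factorial * ((-1)^(2*n+1-j) * (2*n+1-j).factorial) := by
  have hdecomp : (Finset.range (2*n+2)).erase j
      = Finset.range j ∪ Finset.Ico (j+1) (2*n+2) := by
    ext k
    simp only [Finset.mem_erase, Finset.mem_range, Finset.mem_union, Finset.mem_Ico]
    omega
  have hdisj : Disjoint (Finset.range j) (Finset.Ico (j+1) (2*n+2)) := by
    rw [Finset.disjoint_left]
    intro k hk hk'
    rw [Finset.mem_range] at hk
    rw [Finset.mem_Ico] at hk'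
    omega
  rw [hdecomp, Finset.prod_union hdisj, prod_sub_left', prod_sub_right' j _ hj,
    show 2*n+2-1-j = 2*n+1-j by omega]

lemma dd_weight (n j : ℕ) (hj : j < 2*n+2) (x : ℝ) :
    Polynomial.eval (x + 1/2)
      (Lagrange.basis (Finset.range (2*n+2)) (fun k : ℕ => x + k - n) j) = ddCoef n j := by
  have hjle : j ≤ 2*n+1 := by omega
  rw [Lagrange.basis, Polynomial.eval_prod]
  have hstep : ∀ k ∈ (Finset.range (2*n+2)).erase j,
      Polynomial.eval (x + 1/2)
        (Lagrange.basisDivisor ((fun k : ℕ => x + k - n) j) ((fun k : ℕ => x + k - n) k))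
      = ((j:ℝ) - k)⁻¹ * (((2*n+1:ℝ) - 2*k) * (1/2)) := by
    intro k _
    simp only [Lagrange.basisDivisor, Polynomial.eval_mul, Polynomial.eval_C,
      Polynomial.eval_sub, Polynomial.eval_X]
    have h1 : (x + (j:ℝ) - n) - (x + (k:ℝ) - n) = (j:ℝ) - k := by ring
    have h2 : (x + 1/2) - (x + (k:ℝ) - n) = ((2*n+1:ℝ) - 2*k) * (1/2) := by ring
    rw [h1, h2]
  rw [Finset.prod_congr rfl hstep, Finset.prod_mul_distrib, Finset.prod_mul_distrib,
    Finset.prod_inv_distrib, Finset.prod_const, prod_A n j hj, prod_B n j hj,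
    Finset.card_erase_of_mem (Finset.mem_range.mpr hj), Finset.card_range]
  -- now a scalar identity
  have hsign1 : ((-1:ℝ))^(2*n+1-j) = (-1)^(2*n+1) * (-1)^j := by
    have h1 : ((-1:ℝ))^(2*n+1-j) * (-1)^j = (-1)^(2*n+1) := by
      rw [← pow_add, show 2*n+1-j+j = 2*n+1 by omega]
    have h2 : ((-1:ℝ))^j * (-1)^j = 1 := by
      rw [← pow_add]
      exact Even.neg_one_pow ⟨j, by omega⟩
    calc ((-1:ℝ))^(2*n+1-j) = ((-1:ℝ))^(2*n+1-j) * (((-1:ℝ))^j * (-1)^j) := by rw [h2]; ring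
    _ = (((-1:ℝ))^(2*n+1-j) * (-1)^j) * (-1)^j := by ring
    _ = (-1)^(2*n+1) * (-1)^j := by rw [h1]
  have hsign2 : ((-1:ℝ)) ^ ((j:ℤ) - n - 1) = (-1)^j * (-1)^(n+1) := by
    rw [show ((j:ℤ) - n - 1) = (j:ℤ) - ((n+1:ℕ):ℤ) by push_cast; ring,
      zpow_sub₀ (by norm_num : (-1:ℝ) ≠ 0), zpow_natCast, zpow_natCast, div_eq_mul_inv,
      ← inv_pow, inv_neg, inv_one]
  have hodd : ((-1:ℝ))^(2*n+1) = -1 := Odd.neg_one_pow ⟨n, by ring⟩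
  have hcj : ((Nat.choose (2*n+1) j : ℕ) : ℝ) * j.factorial * (2*n+1-j).factorial
      = (2*n+1).factorial := by
    exact_mod_cast congrArg (Nat.cast : ℕ → ℝ)
      (Nat.choose_mul_factorial_mul_factorial hjle)
  have hcn : ((Nat.choose (2*n+1) n : ℕ) : ℝ) * n.factorial * (n+1).factorial
      = (2*n+1).factorial := by
    have := Nat.choose_mul_factorial_mul_factorial (show n ≤ 2*n+1 by omega)
    rw [show 2*n+1-n = n+1 by omega] at this
    exact_mod_cast congrArg (Nat.cast : ℕ → ℝ) this
  have hF : ((2*(n+1)).factorial : ℝ) = (2*n+2) * (2*n+1).factorial := by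
    rw [show 2*(n+1) = (2*n+1)+1 by ring, Nat.factorial_succ]
    push_cast; ring
  unfold ddCoef
  rw [hsign1, hsign2, hodd]
  have hne2 : (((2 * (j:ℤ) - 2 * n - 1 : ℤ)) : ℝ) ≠ 0 := by
    push_cast
    intro h
    exact hne_odd n j (by linarith)
  have hfj : (j.factorial : ℝ) ≠ 0 := by exact_mod_cast j.factorial_ne_zero
  have hfnj : ((2*n+1-j).factorial : ℝ) ≠ 0 := by exact_mod_cast (2*n+1-j).factorial_ne_zero
  have hfn : (n.factorial : ℝ) ≠ 0 := by exact_mod_cast n.factorial_ne_zero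
  have hfn1 : ((n+1).factorial : ℝ) ≠ 0 := by exact_mod_cast (n+1).factorial_ne_zero
  have hcjr : ((Nat.choose (2*n+1) j : ℕ) : ℝ)
      = (2*n+1).factorial / (j.factorial * (2*n+1-j).factorial) := by
    rw [eq_div_iff (by positivity)]
    linarith [hcj]
  have hcnr : ((Nat.choose (2*n+1) n : ℕ) : ℝ)
      = (2*n+1).factorial / (n.factorial * (n+1).factorial) := by
    rw [eq_div_iff (by positivity)]
    linarith [hcn]
  rw [hcjr, hcnr, hF]
  set F := ((2*n+1).factorial : ℝ)
  push_cast
  have hfe : ((n+1).factorial : ℝ) = ((n:ℝ)+1) * n.factorial := by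
    rw [Nat.factorial_succ]; push_cast; ring
  rw [hfe]
  have hs : ((-1:ℝ))^j = 1 ∨ ((-1:ℝ))^j = -1 := by
    rcases Nat.even_or_odd j with h | h
    · exact Or.inl h.neg_one_pow
    · exact Or.inr h.neg_one_pow
  have ht : ((-1:ℝ))^(n+1) = 1 ∨ ((-1:ℝ))^(n+1) = -1 := by
    rcases Nat.even_or_odd (n+1) with h | h
    · exact Or.inl h.neg_one_pow
    · exact Or.inr h.neg_one_pow
  have hne3 : (2*(j:ℝ) - 2*n - 1) ≠ 0 := fun h => hne_odd n j (by linarith)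
  have hne4 : ((2*n+1:ℝ) - 2*(j:ℝ)) ≠ 0 := hne_odd n j
  rcases hs with hs | hs <;> rcases ht with ht | ht <;> rw [hs, ht] <;>
    rw [show (2*(j:ℝ) - 2*n - 1) = -((2*n+1:ℝ) - 2*j) by ring, one_div_pow] <;>
    field_simp <;> ring
end DDaux

/-- The Deslauriers–Dubuc coefficients reproduce polynomials of degree at most 2n+1. -/
theorem dd_polynomial_reproduction (n : ℕ) (hn : 1 ≤ n)
    (p : Polynomial ℝ) (hp : p.degree ≤ 2 * n + 1) (x : ℝ) :
    ∑ j ∈ Finset.range (2 * n + 2), ddCoef n j * p.eval (x + j - n)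
      = p.eval (x + 1 / 2) := by
  set v : ℕ → ℝ := fun k : ℕ => x + k - n with hv
  have hinj : Set.InjOn v (Finset.range (2*n+2)) := by
    intro a _ b _ h
    simp only [hv] at h
    have : (a:ℝ) = b := by linarith
    exact_mod_cast this
  have hdeg : p.degree < ((Finset.range (2*n+2)).card : WithBot ℕ) := by
    rw [Finset.card_range]
    refine lt_of_le_of_lt hp ?_
    have h1 : ((2*n+1 : ℕ) : WithBot ℕ) < ((2*n+2 : ℕ) : WithBot ℕ) := by
      exact_mod_cast Nat.lt_succ_self (2*n+1)
    calc (2*(n : WithBot ℕ)+1) = ((2*n+1 : ℕ) : WithBot ℕ) := by push_cast; ring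
    _ < _ := h1
  have hrep := Lagrange.eq_interpolate hinj hdeg
  conv_rhs => rw [hrep]
  rw [Lagrange.interpolate_apply, Polynomial.eval_finset_sum]
  refine Finset.sum_congr rfl fun j hj => ?_
  rw [Finset.mem_range] at hj
  rw [Polynomial.eval_mul, Polynomial.eval_C, DDaux.dd_weight n j hj x]
  simp only [Function.comp, hv]
  ring
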